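/- Suppose |Yᵢ| ≤ k₁ almost surely for all i, that 1/pᵢ(e) ≤ k₂ for all i and e ∈ {a, b}, and that P(dᵢ = e, dⱼ = e) > 0 for all i ≠ j and e ∈ {a, b}. Define for e ∈ {a, b}: C(e) = (1/n²)ΣᵢΣ_{j≠i}|Cov(1{dᵢ=e}, 1{dⱼ=e})|, E(e) = (1/n²)ΣᵢΣ_{j≠i} ε̃ᵢⱼ(e,e)ε̃ⱼᵢ(e,e), and U(e) = (1/n²)ΣᵢΣ_{j≠i} Cov(ε̇ᵢⱼ, ε̇ⱼᵢ | dᵢ = e, dⱼ = e). Then the Horvitz–Thompson estimator satisfies Var(τ̂) ≤ 8k₁²k₂/n + 20k₁²k₂²(C(a) + C(b)) + 4(E(a) + E(b) + U(a) + U(b)). -/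

import Mathlib

open MeasureTheory ProbabilityTheory Real Finset

/-- Covariance of two real random variables under a measure `P`. -/
noncomputable def cov {Ω : Type*} [MeasurableSpace Ω] (P : MeasureTheory.Measure Ω)
    (X Y : Ω → ℝ) : ℝ :=
  (∫ ω, X ω * Y ω ∂P) - (∫ ω, X ω ∂P) * ∫ ω, Y ω ∂P

/-- Covariance of two real random variables under the conditional measure `P(·|A)`. -/
noncomputable def condCov {Ω : Type*} [MeasurableSpace Ω] (P : MeasureTheory.Measure Ω)
    (A : Set Ω) (X Y : Ω → ℝ) : ℝ :=
  (∫ ω, X ω * Y ω ∂(P[|A])) - (∫ ω, X ω ∂(P[|A])) * ∫ ω, Y ω ∂(P[|A])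

section AUX
set_option linter.unusedSectionVars false
variable {Ω : Type*} [MeasurableSpace Ω] {P : Measure Ω} [IsProbabilityMeasure P]

lemma vht_int {μ : Measure Ω} [IsFiniteMeasure μ] {f : Ω → ℝ} {C : ℝ}
    (hm : AEStronglyMeasurable f μ)
    (hb : ∀ᵐ ω ∂μ, |f ω| ≤ C) : Integrable f μ :=
  (integrable_const C).mono' hm (by simpa [Real.norm_eq_abs] using hb)

lemma vht_abs_integral_le {μ : Measure Ω} [IsProbabilityMeasure μ] {f : Ω → ℝ} {C : ℝ}
    (hb : ∀ᵐ ω ∂μ, |f ω| ≤ C) : |∫ ω, f ω ∂μ| ≤ C := by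
  have := norm_integral_le_of_norm_le_const (μ := μ) (C := C) (f := f)
    (by simpa [Real.norm_eq_abs] using hb)
  simpa [Real.norm_eq_abs] using this

lemma vht_cond_integral {s : Set Ω} (hs : MeasurableSet s) (f : Ω → ℝ) :
    ∫ ω, f ω ∂(P[|s]) = ((P s).toReal)⁻¹ * ∫ ω, s.indicator f ω ∂P := by
  rw [ProbabilityTheory.cond, integral_smul_measure, integral_indicator hs]
  simp [ENNReal.toReal_inv]

lemma vht_ae_cond {s : Set Ω} {Q : Ω → Prop} (h : ∀ᵐ ω ∂P, Q ω) :
    ∀ᵐ ω ∂(P[|s]), Q ω :=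
  (cond_absolutelyContinuous (s := s)).ae_le h

lemma vht_indicator_mul (s t : Set Ω) (F G : Ω → ℝ) (ω : Ω) :
    s.indicator F ω * t.indicator G ω = (s ∩ t).indicator (fun ω' => F ω' * G ω') ω := by
  by_cases hωs : ω ∈ s
  · by_cases hωt : ω ∈ t
    · rw [Set.indicator_of_mem hωs, Set.indicator_of_mem hωt,
        Set.indicator_of_mem (Set.mem_inter hωs hωt)]
    · rw [Set.indicator_of_notMem hωt, mul_zero,
        Set.indicator_of_notMem (fun h => hωt (Set.mem_of_mem_inter_right h))]
  · rw [Set.indicator_of_notMem hωs, zero_mul,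
      Set.indicator_of_notMem (fun h => hωs (Set.mem_of_mem_inter_left h))]

lemma vht_cov_indicator {s t : Set Ω} (hs : MeasurableSet s) (ht : MeasurableSet t) :
    cov P (s.indicator fun _ => (1:ℝ)) (t.indicator fun _ => (1:ℝ))
      = (P (s ∩ t)).toReal - (P s).toReal * (P t).toReal := by
  have h1 : ∀ ω, (s.indicator (fun _ => (1:ℝ))) ω * (t.indicator (fun _ => (1:ℝ))) ω
      = (s ∩ t).indicator (fun _ => (1:ℝ)) ω := by
    intro ω; rw [vht_indicator_mul]; simp
  simp only [cov]
  simp_rw [h1]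
  rw [integral_indicator_const (1:ℝ) (hs.inter ht), integral_indicator_const (1:ℝ) hs,
    integral_indicator_const (1:ℝ) ht]
  simp
  rfl

lemma vht_ind_sub_int {s : Set Ω} (hs : MeasurableSet s) {f : Ω → ℝ} (hf : Measurable f)
    {k₁ : ℝ} (hb : ∀ᵐ ω ∂P, |f ω| ≤ k₁) (c : ℝ) :
    (Integrable (fun ω => s.indicator (fun ω' => f ω' - c) ω) P) ∧
    ∫ ω, s.indicator (fun ω' => f ω' - c) ω ∂P
      = (∫ ω, s.indicator f ω ∂P) - c * (P s).toReal := by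
  have hint_f : Integrable (fun ω => s.indicator f ω) P := by
    refine vht_int (hf.indicator hs).aestronglyMeasurable (C := |k₁|) ?_
    filter_upwards [hb] with ω h
    by_cases hω : ω ∈ s
    · rw [Set.indicator_of_mem hω]; exact h.trans (le_abs_self _)
    · rw [Set.indicator_of_notMem hω]; simp
  have e : ∀ ω, s.indicator (fun ω' => f ω' - c) ω
      = s.indicator f ω - s.indicator (fun _ => c) ω := by
    intro ω; by_cases hω : ω ∈ s
    · rw [Set.indicator_of_mem hω, Set.indicator_of_mem hω, Set.indicator_of_mem hω]
    · rw [Set.indicator_of_notMem hω, Set.indicator_of_notMem hω,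
        Set.indicator_of_notMem hω, sub_zero]
  constructor
  · simp_rw [e]; exact hint_f.sub ((integrable_const c).indicator hs)
  · simp_rw [e]
    rw [integral_sub hint_f ((integrable_const c).indicator hs), integral_indicator_const c hs, measureReal_def]
    simp [mul_comm]


lemma vht_offB {s t : Set Ω} (hs : MeasurableSet s) (ht : MeasurableSet t)
    {f g : Ω → ℝ} (hfm : Measurable f) (hgm : Measurable g)
    {k₁ k₂ : ℝ} (hbf : ∀ᵐ ω ∂P, |f ω| ≤ k₁) (hbg : ∀ᵐ ω ∂P, |g ω| ≤ k₁)
    (hpii : P (s ∩ t) ≠ 0)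
    (hks : 1 / (P s).toReal ≤ k₂) (hkt : 1 / (P t).toReal ≤ k₂) :
    cov P (fun ω => s.indicator (fun _ => ∫ x, f x ∂(P[|s])) ω / (P s).toReal)
          (fun ω => t.indicator (fun _ => ∫ x, g x ∂(P[|t])) ω / (P t).toReal)
      ≤ k₁ ^ 2 * k₂ ^ 2 *
        |cov P (s.indicator fun _ => (1:ℝ)) (t.indicator fun _ => (1:ℝ))| := by
  set ps : ℝ := (P s).toReal with hps
  set pt : ℝ := (P t).toReal with hpt
  set pii : ℝ := (P (s ∩ t)).toReal with hpii'
  set ms : ℝ := ∫ x, f x ∂(P[|s]) with hms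
  set mt : ℝ := ∫ x, g x ∂(P[|t]) with hmt
  have hpiipos : 0 < pii := ENNReal.toReal_pos hpii (measure_ne_top _ _)
  have hs0 : P s ≠ 0 := fun h => hpii (le_antisymm (h ▸ measure_mono Set.inter_subset_left) (zero_le))
  have ht0 : P t ≠ 0 := fun h => hpii (le_antisymm (h ▸ measure_mono Set.inter_subset_right) (zero_le))
  have hpspos : 0 < ps := ENNReal.toReal_pos hs0 (measure_ne_top _ _)
  have hptpos : 0 < pt := ENNReal.toReal_pos ht0 (measure_ne_top _ _)
  haveI : IsProbabilityMeasure (P[|s]) := cond_isProbabilityMeasure hs0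
  haveI : IsProbabilityMeasure (P[|t]) := cond_isProbabilityMeasure ht0
  have hmsb : |ms| ≤ k₁ := vht_abs_integral_le (vht_ae_cond hbf)
  have hmtb : |mt| ≤ k₁ := vht_abs_integral_le (vht_ae_cond hbg)
  have hk1 : 0 ≤ k₁ := (abs_nonneg ms).trans hmsb
  have hk2 : 0 < k₂ := lt_of_lt_of_le (by positivity) hks
  -- compute the covariance explicitly
  have e1 : ∀ ω, (s.indicator (fun _ => ms) ω / ps) * (t.indicator (fun _ => mt) ω / pt)
      = (s ∩ t).indicator (fun _ => ms * mt) ω / (ps * pt) := by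
    intro ω
    rw [div_mul_div_comm, vht_indicator_mul]
  have i1 : ∫ ω, (s.indicator (fun _ => ms) ω / ps) * (t.indicator (fun _ => mt) ω / pt) ∂P
      = ms * mt * pii / (ps * pt) := by
    simp_rw [e1]
    rw [integral_div, integral_indicator_const _ (hs.inter ht), measureReal_def]
    rw [← hpii']
    ring_nf
  have i2 : ∫ ω, s.indicator (fun _ => ms) ω / ps ∂P = ms := by
    rw [integral_div, integral_indicator_const _ hs, measureReal_def, ← hps, smul_eq_mul, mul_comm]
    field_simp
  have i3 : ∫ ω, t.indicator (fun _ => mt) ω / pt ∂P = mt := by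
    rw [integral_div, integral_indicator_const _ ht, measureReal_def, ← hpt, smul_eq_mul, mul_comm]
    field_simp
  have hcov : cov P (fun ω => s.indicator (fun _ => ms) ω / ps)
      (fun ω => t.indicator (fun _ => mt) ω / pt)
      = (ms * mt / (ps * pt)) * (pii - ps * pt) := by
    simp only [cov, i1, i2, i3]
    field_simp
  rw [hcov, vht_cov_indicator hs ht, ← hpii', ← hps, ← hpt]
  have habs : ms * mt / (ps * pt) * (pii - ps * pt) ≤ |ms * mt / (ps * pt)| * |pii - ps * pt| := by
    rw [← abs_mul]; exact le_abs_self _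
  refine habs.trans ?_
  have h1 : |ms * mt / (ps * pt)| = |ms| * |mt| * (1/ps) * (1/pt) := by
    rw [abs_div, abs_mul, abs_mul, abs_of_pos hpspos, abs_of_pos hptpos]
    field_simp
  rw [h1]
  have h2 : |ms| * |mt| * (1/ps) * (1/pt) ≤ k₁ * k₁ * k₂ * k₂ := by
    have g1 : |ms| * |mt| ≤ k₁ * k₁ := mul_le_mul hmsb hmtb (abs_nonneg _) hk1
    have g2 : |ms| * |mt| * (1/ps) ≤ (k₁ * k₁) * k₂ :=
      mul_le_mul g1 hks (by positivity) (by positivity)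
    exact mul_le_mul g2 hkt (by positivity) (by positivity)
  calc |ms| * |mt| * (1/ps) * (1/pt) * |pii - ps * pt|
      ≤ (k₁ * k₁ * k₂ * k₂) * |pii - ps * pt| :=
        mul_le_mul_of_nonneg_right h2 (abs_nonneg _)
    _ = k₁^2 * k₂^2 * |pii - ps * pt| := by ring

lemma vht_int_mul {μ : Measure Ω} [IsFiniteMeasure μ] {f g : Ω → ℝ} {C D : ℝ}
    (hfm : AEStronglyMeasurable f μ) (hgm : AEStronglyMeasurable g μ)
    (hf : ∀ᵐ ω ∂μ, |f ω| ≤ C) (hg : ∀ᵐ ω ∂μ, |g ω| ≤ D) :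
    Integrable (fun ω => f ω * g ω) μ := by
  refine vht_int (hfm.mul hgm) (C := C * D) ?_
  filter_upwards [hf, hg] with ω h1 h2
  calc |f ω * g ω| = |f ω| * |g ω| := abs_mul _ _
    _ ≤ C * D := mul_le_mul h1 h2 (abs_nonneg _) ((abs_nonneg _).trans h1)

lemma vht_offA {s t : Set Ω} (hs : MeasurableSet s) (ht : MeasurableSet t)
    {f g : Ω → ℝ} (hfm : Measurable f) (hgm : Measurable g)
    {k₁ k₂ : ℝ} (hbf : ∀ᵐ ω ∂P, |f ω| ≤ k₁) (hbg : ∀ᵐ ω ∂P, |g ω| ≤ k₁)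
    (hpii0 : P (s ∩ t) ≠ 0)
    (hks : 1 / (P s).toReal ≤ k₂) (hkt : 1 / (P t).toReal ≤ k₂) :
    cov P (fun ω => s.indicator (fun ω' => f ω' - ∫ x, f x ∂(P[|s])) ω / (P s).toReal)
          (fun ω => t.indicator (fun ω' => g ω' - ∫ x, g x ∂(P[|t])) ω / (P t).toReal)
      ≤ ((∫ x, f x ∂(P[|s ∩ t])) - ∫ x, f x ∂(P[|s]))
          * ((∫ x, g x ∂(P[|s ∩ t])) - ∫ x, g x ∂(P[|t]))
        + (∫ ω, (f ω - ∫ x, f x ∂(P[|s ∩ t])) * (g ω - ∫ x, g x ∂(P[|s ∩ t])) ∂(P[|s ∩ t]))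
        + 4 * k₁ ^ 2 * k₂ ^ 2 *
            |cov P (s.indicator fun _ => (1:ℝ)) (t.indicator fun _ => (1:ℝ))| := by
  set ps : ℝ := (P s).toReal with hps
  set pt : ℝ := (P t).toReal with hpt
  set pii : ℝ := (P (s ∩ t)).toReal with hpii
  set ms : ℝ := ∫ x, f x ∂(P[|s]) with hms
  set mt : ℝ := ∫ x, g x ∂(P[|t]) with hmt
  set mf : ℝ := ∫ x, f x ∂(P[|s ∩ t]) with hmf
  set mg : ℝ := ∫ x, g x ∂(P[|s ∩ t]) with hmg
  set V : ℝ := ∫ ω, (f ω - mf) * (g ω - mg) ∂(P[|s ∩ t]) with hV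
  set D : ℝ := ∫ ω, (f ω - ms) * (g ω - mt) ∂(P[|s ∩ t]) with hD
  have hpiipos : 0 < pii := ENNReal.toReal_pos hpii0 (measure_ne_top _ _)
  have hs0 : P s ≠ 0 := fun h => hpii0 (le_antisymm (h ▸ measure_mono Set.inter_subset_left) (zero_le))
  have ht0 : P t ≠ 0 := fun h => hpii0 (le_antisymm (h ▸ measure_mono Set.inter_subset_right) (zero_le))
  have hpspos : 0 < ps := ENNReal.toReal_pos hs0 (measure_ne_top _ _)
  have hptpos : 0 < pt := ENNReal.toReal_pos ht0 (measure_ne_top _ _)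
  haveI : IsProbabilityMeasure (P[|s]) := cond_isProbabilityMeasure hs0
  haveI : IsProbabilityMeasure (P[|t]) := cond_isProbabilityMeasure ht0
  haveI : IsProbabilityMeasure (P[|s ∩ t]) := cond_isProbabilityMeasure hpii0
  have hmsb : |ms| ≤ k₁ := vht_abs_integral_le (vht_ae_cond hbf)
  have hmtb : |mt| ≤ k₁ := vht_abs_integral_le (vht_ae_cond hbg)
  have hk1 : 0 ≤ k₁ := (abs_nonneg ms).trans hmsb
  have hk2 : 0 < k₂ := lt_of_lt_of_le (by positivity) hks
  -- mean of the first factor is zero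
  have hindf : ∫ ω, s.indicator f ω ∂P = ps * ms := by
    rw [hms, vht_cond_integral hs, ← hps]
    field_simp
  obtain ⟨hintA, hintAval⟩ := vht_ind_sub_int (P := P) hs hfm hbf ms
  have iA : ∫ ω, s.indicator (fun ω' => f ω' - ms) ω ∂P = 0 := by
    rw [hintAval, hindf, ← hps]; ring
  have iA' : ∫ ω, s.indicator (fun ω' => f ω' - ms) ω / ps ∂P = 0 := by
    rw [integral_div, iA, zero_div]
  -- product integral
  have e1 : ∀ ω, (s.indicator (fun ω' => f ω' - ms) ω / ps)
        * (t.indicator (fun ω' => g ω' - mt) ω / pt)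
      = (s ∩ t).indicator (fun ω' => (f ω' - ms) * (g ω' - mt)) ω / (ps * pt) := by
    intro ω
    rw [div_mul_div_comm, vht_indicator_mul]
  have iD : ∫ ω, (s ∩ t).indicator (fun ω' => (f ω' - ms) * (g ω' - mt)) ω ∂P = pii * D := by
    rw [hD, vht_cond_integral (hs.inter ht), ← hpii]
    field_simp
  have iProd : ∫ ω, (s.indicator (fun ω' => f ω' - ms) ω / ps)
        * (t.indicator (fun ω' => g ω' - mt) ω / pt) ∂P = pii * D / (ps * pt) := by
    simp_rw [e1]
    rw [integral_div, iD]
  have hcov : cov P (fun ω => s.indicator (fun ω' => f ω' - ms) ω / ps)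
      (fun ω => t.indicator (fun ω' => g ω' - mt) ω / pt) = pii * D / (ps * pt) := by
    simp only [cov, iProd, iA', zero_mul, sub_zero]
  -- integrability over the conditional measure
  have hfc : Integrable f (P[|s ∩ t]) :=
    vht_int hfm.aestronglyMeasurable (vht_ae_cond hbf)
  have hgc : Integrable g (P[|s ∩ t]) :=
    vht_int hgm.aestronglyMeasurable (vht_ae_cond hbg)
  have hmfb : |mf| ≤ k₁ := vht_abs_integral_le (vht_ae_cond hbf)
  have hmgb : |mg| ≤ k₁ := vht_abs_integral_le (vht_ae_cond hbg)
  have hVint : Integrable (fun ω => (f ω - mf) * (g ω - mg)) (P[|s ∩ t]) := by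
    refine vht_int_mul ((hfm.sub measurable_const).aestronglyMeasurable)
      ((hgm.sub measurable_const).aestronglyMeasurable)
      (C := k₁ + |mf|) (D := k₁ + |mg|) ?_ ?_
    · filter_upwards [vht_ae_cond (P := P) (s := s ∩ t) hbf] with ω h
      calc |f ω - mf| ≤ |f ω| + |mf| := abs_sub _ _
        _ ≤ k₁ + |mf| := by linarith
    · filter_upwards [vht_ae_cond (P := P) (s := s ∩ t) hbg] with ω h
      calc |g ω - mg| ≤ |g ω| + |mg| := abs_sub _ _
        _ ≤ k₁ + |mg| := by linarith
  -- decomposition D = V + (mf - ms)(mg - mt)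
  have hDeq : D = V + (mf - ms) * (mg - mt) := by
    have e2 : ∀ ω, (f ω - ms) * (g ω - mt)
        = (f ω - mf) * (g ω - mg)
          + ((mg - mt) * f ω + ((mf - ms) * g ω + (ms * mt - mf * mg))) := by
      intro ω; ring
    have hL1 : Integrable (fun a => (mg - mt) * f a) (P[|s ∩ t]) := hfc.const_mul _
    have hL2a : Integrable (fun a => (mf - ms) * g a) (P[|s ∩ t]) := hgc.const_mul _
    have hL2 : Integrable (fun a => (mf - ms) * g a + (ms * mt - mf * mg)) (P[|s ∩ t]) :=
      hL2a.add (integrable_const _)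
    have hlin : Integrable (fun a => (mg - mt) * f a
        + ((mf - ms) * g a + (ms * mt - mf * mg))) (P[|s ∩ t]) := hL1.add hL2
    rw [hD]
    simp_rw [e2]
    rw [integral_add hVint hlin, integral_add hL1 hL2,
      integral_add hL2a (integrable_const _),
      integral_const_mul, integral_const_mul, integral_const]
    simp only [measure_univ, ENNReal.toReal_one, probReal_univ, smul_eq_mul, one_mul]
    rw [← hV, ← hmf, ← hmg]
    ring
  -- bound |D|
  have hDbd : |D| ≤ 4 * k₁^2 := by
    rw [hD]
    have : (4 : ℝ) * k₁^2 = (k₁ + k₁) * (k₁ + k₁) := by ring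
    rw [this]
    refine vht_abs_integral_le ?_
    filter_upwards [vht_ae_cond (P := P) (s := s ∩ t) hbf,
      vht_ae_cond (P := P) (s := s ∩ t) hbg] with ω h1 h2
    have b1 : |f ω - ms| ≤ k₁ + k₁ := by
      calc |f ω - ms| ≤ |f ω| + |ms| := abs_sub _ _
        _ ≤ k₁ + k₁ := by linarith
    have b2 : |g ω - mt| ≤ k₁ + k₁ := by
      calc |g ω - mt| ≤ |g ω| + |mt| := abs_sub _ _
        _ ≤ k₁ + k₁ := by linarith
    calc |(f ω - ms) * (g ω - mt)| = |f ω - ms| * |g ω - mt| := abs_mul _ _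
      _ ≤ (k₁ + k₁) * (k₁ + k₁) := mul_le_mul b1 b2 (abs_nonneg _) (by linarith)
  -- final algebra
  rw [hcov]
  have hsplit : pii * D / (ps * pt) = D + ((pii - ps * pt) / (ps * pt)) * D := by
    field_simp
    ring
  have hcovI : cov P (s.indicator fun _ => (1:ℝ)) (t.indicator fun _ => (1:ℝ))
      = pii - ps * pt := by
    rw [vht_cov_indicator hs ht, ← hpii, ← hps, ← hpt]
  have hbound : ((pii - ps * pt) / (ps * pt)) * D ≤ 4 * k₁^2 * k₂^2 * |pii - ps * pt| := by
    have h0 : ((pii - ps * pt) / (ps * pt)) * D ≤ |((pii - ps * pt) / (ps * pt)) * D| :=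
      le_abs_self _
    refine h0.trans ?_
    rw [abs_mul, abs_div, abs_of_pos (by positivity : (0:ℝ) < ps * pt)]
    have h1 : |pii - ps * pt| / (ps * pt) * |D|
        = |pii - ps * pt| * ((1/ps) * (1/pt) * |D|) := by
      field_simp
    rw [h1]
    have h2 : (1/ps) * (1/pt) * |D| ≤ k₂ * k₂ * (4 * k₁^2) := by
      have g1 : (1/ps) * (1/pt) ≤ k₂ * k₂ :=
        mul_le_mul hks hkt (by positivity) hk2.le
      exact mul_le_mul g1 hDbd (abs_nonneg _) (by positivity)
    calc |pii - ps * pt| * ((1/ps) * (1/pt) * |D|)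
        ≤ |pii - ps * pt| * (k₂ * k₂ * (4 * k₁^2)) :=
          mul_le_mul_of_nonneg_left h2 (abs_nonneg _)
      _ = 4 * k₁^2 * k₂^2 * |pii - ps * pt| := by ring
  rw [hcovI, hsplit]
  rw [hDeq] at hbound
  rw [hDeq]
  linarith

lemma vht_ae_mem_cond {s : Set Ω} (hs : MeasurableSet s) : ∀ᵐ ω ∂(P[|s]), ω ∈ s := by
  rw [Filter.Eventually, mem_ae_iff]
  have h : {ω | ω ∈ s}ᶜ = sᶜ := rfl
  rw [h, cond_apply hs]
  simp

lemma vht_cov_le_int_mul_self {f : Ω → ℝ} : cov P f f ≤ ∫ ω, f ω * f ω ∂P := by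
  have : (∫ ω, f ω ∂P) * (∫ ω, f ω ∂P) ≥ 0 := mul_self_nonneg _
  simp only [cov]; linarith

lemma vht_cov_self_nonneg {f : Ω → ℝ} (hf : Integrable f P)
    (hff : Integrable (fun ω => f ω * f ω) P) : 0 ≤ cov P f f := by
  set m := ∫ ω, f ω ∂P with hm
  have h1 : ∀ ω, (f ω - m)^2 = f ω * f ω - (2*m) * f ω + m^2 := by intro ω; ring
  have h2 : ∫ ω, (f ω - m)^2 ∂P = (∫ ω, f ω * f ω ∂P) - (2*m)*m + m^2 := by
    simp_rw [h1]
    have ha : Integrable (fun ω => f ω * f ω - 2*m*f ω) P := hff.sub (hf.const_mul _)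
    rw [integral_add ha (integrable_const _),
      integral_sub hff (hf.const_mul (2*m)), integral_const_mul, integral_const]
    simp [← hm]
  have h3 : 0 ≤ ∫ ω, (f ω - m)^2 ∂P := integral_nonneg fun ω => sq_nonneg _
  have h4 : cov P f f = ∫ ω, (f ω - m)^2 ∂P := by rw [h2]; simp [cov, ← hm]; ring
  linarith [h4 ▸ h3]

lemma vht_cov_expand {f g : Ω → ℝ} (c : ℝ) (hf : Integrable f P) (hg : Integrable g P)
    (hff : Integrable (fun ω => f ω * f ω) P) (hfg : Integrable (fun ω => f ω * g ω) P)
    (hgg : Integrable (fun ω => g ω * g ω) P) :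
    cov P (fun ω => f ω + c * g ω) (fun ω => f ω + c * g ω)
      = cov P f f + 2 * c * cov P f g + c ^ 2 * cov P g g := by
  have h1 : ∀ ω, (f ω + c * g ω) * (f ω + c * g ω)
      = f ω * f ω + (2*c) * (f ω * g ω) + c^2 * (g ω * g ω) := by intro ω; ring
  have ha : Integrable (fun ω => f ω * f ω + (2*c) * (f ω * g ω)) P :=
    hff.add (hfg.const_mul _)
  have h2 : ∫ ω, (f ω + c * g ω) * (f ω + c * g ω) ∂P
      = (∫ ω, f ω * f ω ∂P) + (2*c) * (∫ ω, f ω * g ω ∂P)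
        + c^2 * ∫ ω, g ω * g ω ∂P := by
    simp_rw [h1]
    rw [integral_add ha (hgg.const_mul _), integral_add hff (hfg.const_mul _),
      integral_const_mul, integral_const_mul]
  have h3 : ∫ ω, (f ω + c * g ω) ∂P = (∫ ω, f ω ∂P) + c * ∫ ω, g ω ∂P := by
    rw [integral_add hf (hg.const_mul _), integral_const_mul]
  simp only [cov, h2, h3]; ring

lemma vht_cov_sub_le {f g : Ω → ℝ} (hf : Integrable f P) (hg : Integrable g P)
    (hff : Integrable (fun ω => f ω * f ω) P) (hfg : Integrable (fun ω => f ω * g ω) P)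
    (hgg : Integrable (fun ω => g ω * g ω) P) :
    cov P (fun ω => f ω - g ω) (fun ω => f ω - g ω)
      ≤ 2 * cov P f f + 2 * cov P g g := by
  have e1 : (fun ω => f ω - g ω) = (fun ω => f ω + (-1 : ℝ) * g ω) := by funext ω; ring
  have e2 := vht_cov_expand (P := P) (-1 : ℝ) hf hg hff hfg hgg
  have e3 := vht_cov_expand (P := P) (1 : ℝ) hf hg hff hfg hgg
  have hplus : Integrable (fun ω => (f ω + 1 * g ω) * (f ω + 1 * g ω)) P := by
    have h : (fun ω => (f ω + 1 * g ω) * (f ω + 1 * g ω))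
        = fun ω => f ω * f ω + 2 * (f ω * g ω) + g ω * g ω := by funext ω; ring
    rw [h]; exact (hff.add (hfg.const_mul _)).add hgg
  have h0 : 0 ≤ cov P (fun ω => f ω + 1 * g ω) (fun ω => f ω + 1 * g ω) :=
    vht_cov_self_nonneg (hf.add (hg.const_mul _)) hplus
  rw [e1, e2]
  rw [e3] at h0
  nlinarith [h0]

lemma vht_cov_add_le {f g : Ω → ℝ} (hf : Integrable f P) (hg : Integrable g P)
    (hff : Integrable (fun ω => f ω * f ω) P) (hfg : Integrable (fun ω => f ω * g ω) P)
    (hgg : Integrable (fun ω => g ω * g ω) P) :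
    cov P (fun ω => f ω + g ω) (fun ω => f ω + g ω)
      ≤ 2 * cov P f f + 2 * cov P g g := by
  have e1 : (fun ω => f ω + g ω) = (fun ω => f ω + (1 : ℝ) * g ω) := by funext ω; ring
  have e2 := vht_cov_expand (P := P) (1 : ℝ) hf hg hff hfg hgg
  have e3 := vht_cov_expand (P := P) (-1 : ℝ) hf hg hff hfg hgg
  have hminus : Integrable (fun ω => (f ω + (-1) * g ω) * (f ω + (-1) * g ω)) P := by
    have h : (fun ω => (f ω + (-1) * g ω) * (f ω + (-1) * g ω))
        = fun ω => f ω * f ω + (-2) * (f ω * g ω) + g ω * g ω := by funext ω; ring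
    rw [h]; exact (hff.add (hfg.const_mul _)).add hgg
  have h0 : 0 ≤ cov P (fun ω => f ω + (-1 : ℝ) * g ω) (fun ω => f ω + (-1 : ℝ) * g ω) :=
    vht_cov_self_nonneg (hf.add (hg.const_mul _)) hminus
  rw [e1, e2]
  rw [e3] at h0
  nlinarith [h0]

lemma vht_cov_sum {ι : Type*} [Fintype ι] (c : ℝ) (f : ι → Ω → ℝ)
    (hm : ∀ i, Measurable (f i)) (hb : ∀ i, ∃ C, ∀ᵐ ω ∂P, |f i ω| ≤ C) :
    cov P (fun ω => c * ∑ i, f i ω) (fun ω => c * ∑ i, f i ω)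
      = c ^ 2 * ∑ i, ∑ j, cov P (f i) (f j) := by
  choose C hC using hb
  have hint : ∀ i, Integrable (f i) P := fun i => vht_int (hm i).aestronglyMeasurable (hC i)
  have hintm : ∀ i j, Integrable (fun ω => f i ω * f j ω) P := fun i j =>
    vht_int_mul (hm i).aestronglyMeasurable (hm j).aestronglyMeasurable (hC i) (hC j)
  have h1 : ∫ ω, (c * ∑ i, f i ω) * (c * ∑ i, f i ω) ∂P
      = c^2 * ∑ i, ∑ j, ∫ ω, f i ω * f j ω ∂P := by
    have e : ∀ ω : Ω, (c * ∑ i, f i ω) * (c * ∑ i, f i ω)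
        = c^2 * ∑ i, ∑ j, f i ω * f j ω := by
      intro ω
      rw [show (c * ∑ i, f i ω) * (c * ∑ i, f i ω)
          = c^2 * ((∑ i, f i ω) * ∑ j, f j ω) from by ring, Finset.sum_mul_sum]
    simp_rw [e]
    rw [integral_const_mul]
    congr 1
    rw [integral_finset_sum _ (fun i _ => integrable_finset_sum _ (fun j _ => hintm i j))]
    exact Finset.sum_congr rfl fun i _ => integral_finset_sum _ (fun j _ => hintm i j)
  have h2 : ∫ ω, (c * ∑ i, f i ω) ∂P = c * ∑ i, ∫ ω, f i ω ∂P := by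
    rw [integral_const_mul]
    congr 1
    exact integral_finset_sum _ (fun i _ => hint i)
  simp only [cov, h1, h2]
  rw [show (c * ∑ i, ∫ ω, f i ω ∂P) * (c * ∑ i, ∫ ω, f i ω ∂P)
      = c^2 * ((∑ i, ∫ ω, f i ω ∂P) * ∑ j, ∫ ω, f j ω ∂P) from by ring,
    Finset.sum_mul_sum, ← mul_sub]
  congr 1
  rw [← Finset.sum_sub_distrib]
  exact Finset.sum_congr rfl fun i _ => (Finset.sum_sub_distrib ..).symm

lemma vht_bd {s : Set Ω} {F : Ω → ℝ} {C k₂ : ℝ} (hC : 0 ≤ C) (hb : ∀ᵐ ω ∂P, |F ω| ≤ C)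
    (hk : 1/(P s).toReal ≤ k₂) :
    ∀ᵐ ω ∂P, |s.indicator F ω / (P s).toReal| ≤ C * k₂ := by
  have hq0 : 0 ≤ (P s).toReal := ENNReal.toReal_nonneg
  have h1q : 0 ≤ 1/(P s).toReal := by positivity
  have hk2 : 0 ≤ k₂ := le_trans h1q hk
  filter_upwards [hb] with ω h
  by_cases hω : ω ∈ s
  · rw [Set.indicator_of_mem hω, abs_div, abs_of_nonneg hq0, div_eq_mul_one_div]
    exact mul_le_mul h hk h1q hC
  · rw [Set.indicator_of_notMem hω]
    simp only [zero_div, abs_zero]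
    positivity

lemma vht_sum_bd {n : ℕ} (c : ℝ) (f : Fin n → Ω → ℝ)
    (hb : ∀ i, ∃ C, ∀ᵐ ω ∂P, |f i ω| ≤ C) :
    ∃ C, ∀ᵐ ω ∂P, |c * ∑ i, f i ω| ≤ C := by
  choose C hC using hb
  refine ⟨|c| * ∑ i, C i, ?_⟩
  have hall : ∀ᵐ ω ∂P, ∀ i, |f i ω| ≤ C i := (MeasureTheory.ae_all_iff).2 hC
  filter_upwards [hall] with ω h
  calc |c * ∑ i, f i ω| = |c| * |∑ i, f i ω| := abs_mul _ _
    _ ≤ |c| * ∑ i, |f i ω| :=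
        mul_le_mul_of_nonneg_left (Finset.abs_sum_le_sum_abs _ _) (abs_nonneg _)
    _ ≤ |c| * ∑ i, C i :=
        mul_le_mul_of_nonneg_left (Finset.sum_le_sum fun i _ => h i) (abs_nonneg _)

lemma vht_condCov_eq {s' : Set Ω} (hs' : MeasurableSet s') (hP : P s' ≠ 0)
    {f g u v : Ω → ℝ} (hfm : Measurable f) (hgm : Measurable g)
    {k₁ : ℝ} (hbf : ∀ᵐ ω ∂P, |f ω| ≤ k₁) (hbg : ∀ᵐ ω ∂P, |g ω| ≤ k₁)
    (hu : ∀ᵐ ω ∂(P[|s']), u ω = f ω - ∫ x, f x ∂(P[|s']))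
    (hv : ∀ᵐ ω ∂(P[|s']), v ω = g ω - ∫ x, g x ∂(P[|s'])) :
    condCov P s' u v
      = ∫ ω, (f ω - ∫ x, f x ∂(P[|s'])) * (g ω - ∫ x, g x ∂(P[|s'])) ∂(P[|s']) := by
  haveI : IsProbabilityMeasure (P[|s']) := cond_isProbabilityMeasure hP
  set mf : ℝ := ∫ x, f x ∂(P[|s']) with hmf
  set mg : ℝ := ∫ x, g x ∂(P[|s']) with hmg
  have hfc : Integrable f (P[|s']) := vht_int hfm.aestronglyMeasurable (vht_ae_cond hbf)
  have hgc : Integrable g (P[|s']) := vht_int hgm.aestronglyMeasurable (vht_ae_cond hbg)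
  have h1 : ∫ ω, u ω * v ω ∂(P[|s']) = ∫ ω, (f ω - mf) * (g ω - mg) ∂(P[|s']) := by
    refine integral_congr_ae ?_
    filter_upwards [hu, hv] with ω e1 e2
    rw [e1, e2]
  have h2 : ∫ ω, u ω ∂(P[|s']) = 0 := by
    rw [integral_congr_ae hu, integral_sub hfc (integrable_const _), integral_const]
    simp [← hmf]
  have h3 : ∫ ω, v ω ∂(P[|s']) = 0 := by
    rw [integral_congr_ae hv, integral_sub hgc (integrable_const _), integral_const]
    simp [← hmg]
  rw [condCov, h1, h2, h3]
  ring

lemma vht_diag {s : Set Ω} (hs : MeasurableSet s) {f : Ω → ℝ} (hf : Measurable f)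
    {k₁ k₂ : ℝ} (hb : ∀ᵐ ω ∂P, |f ω| ≤ k₁) (hk1 : 0 ≤ k₁)
    (hk₂ : 1 / (P s).toReal ≤ k₂) :
    cov P (fun ω => s.indicator (fun ω' => f ω' - ∫ x, f x ∂(P[|s])) ω / (P s).toReal)
          (fun ω => s.indicator (fun ω' => f ω' - ∫ x, f x ∂(P[|s])) ω / (P s).toReal)
    + cov P (fun ω => s.indicator (fun _ => ∫ x, f x ∂(P[|s])) ω / (P s).toReal)
            (fun ω => s.indicator (fun _ => ∫ x, f x ∂(P[|s])) ω / (P s).toReal)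
    ≤ k₁ ^ 2 * k₂ := by
  set q : ℝ := (P s).toReal with hq
  set m : ℝ := ∫ x, f x ∂(P[|s]) with hm
  have hq0 : 0 ≤ q := ENNReal.toReal_nonneg
  rcases eq_or_lt_of_le hq0 with hq' | hq'
  · -- q = 0 : both functions are zero
    have hk2 : 0 ≤ k₂ := by
      have : 1 / q = 0 := by rw [← hq']; simp
      linarith [hk₂, this.symm.le]
    simp only [← hq', div_zero]
    simp [cov]
    positivity
  · -- q > 0
    have hqne : q ≠ 0 := ne_of_gt hq'
    have hmint : ∫ ω, s.indicator f ω ∂P = q * m := by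
      rw [hm, vht_cond_integral hs, ← hq]
      field_simp
    -- integrability
    have hind_meas : Measurable fun ω => s.indicator (fun ω' => f ω' - m) ω :=
      (hf.sub measurable_const).indicator hs
    have hind_bd : ∀ᵐ ω ∂P, |s.indicator (fun ω' => f ω' - m) ω| ≤ k₁ + |m| := by
      filter_upwards [hb] with ω h
      by_cases hω : ω ∈ s
      · rw [Set.indicator_of_mem hω]
        calc |f ω - m| ≤ |f ω| + |m| := abs_sub _ _
          _ ≤ k₁ + |m| := by linarith
      · rw [Set.indicator_of_notMem hω]; simp; positivity
    have hint_ff : Integrable (fun ω => s.indicator (fun ω' => f ω' * f ω') ω) P := by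
      refine vht_int ((hf.mul hf).indicator hs).aestronglyMeasurable (C := k₁^2) ?_
      filter_upwards [hb] with ω h
      by_cases hω : ω ∈ s
      · rw [Set.indicator_of_mem hω]
        calc |f ω * f ω| = |f ω| * |f ω| := abs_mul _ _
          _ ≤ k₁ * k₁ := mul_le_mul h h (abs_nonneg _) hk1
          _ = k₁^2 := by ring
      · rw [Set.indicator_of_notMem hω]; simp; positivity
    have hint_f : Integrable (fun ω => s.indicator f ω) P := by
      refine vht_int (hf.indicator hs).aestronglyMeasurable (C := k₁) ?_
      filter_upwards [hb] with ω h
      by_cases hω : ω ∈ s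
      · rwa [Set.indicator_of_mem hω]
      · rw [Set.indicator_of_notMem hω]; simpa
    -- cov ≤ second moment for both pieces
    have c1 := vht_cov_le_int_mul_self (P := P)
      (f := fun ω => s.indicator (fun ω' => f ω' - m) ω / q)
    have c2 := vht_cov_le_int_mul_self (P := P)
      (f := fun ω => s.indicator (fun _ => m) ω / q)
    -- second moments
    have e1 : ∀ ω, (s.indicator (fun ω' => f ω' - m) ω / q) * (s.indicator (fun ω' => f ω' - m) ω / q)
        = (s.indicator (fun ω' => f ω' * f ω') ω - 2 * m * s.indicator f ω
            + s.indicator (fun _ => m^2) ω) / q^2 := by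
      intro ω
      by_cases hω : ω ∈ s
      · simp only [Set.indicator_of_mem hω]; field_simp; ring
      · simp only [Set.indicator_of_notMem hω]; simp
    have e2 : ∀ ω, (s.indicator (fun _ => m) ω / q) * (s.indicator (fun _ => m) ω / q)
        = s.indicator (fun _ => m^2) ω / q^2 := by
      intro ω
      by_cases hω : ω ∈ s
      · simp only [Set.indicator_of_mem hω]; field_simp
      · simp only [Set.indicator_of_notMem hω]; simp
    have i2 : ∫ ω, s.indicator (fun _ => m^2) ω ∂P = m^2 * q := by
      rw [integral_indicator_const (m^2) hs, measureReal_def]; rw [← hq]; ring_nf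
    have iSum : (∫ ω, (s.indicator (fun ω' => f ω' - m) ω / q) * (s.indicator (fun ω' => f ω' - m) ω / q) ∂P)
        + (∫ ω, (s.indicator (fun _ => m) ω / q) * (s.indicator (fun _ => m) ω / q) ∂P)
        = (∫ ω, s.indicator (fun ω' => f ω' * f ω') ω ∂P) / q^2 := by
      simp_rw [e1, e2]
      rw [integral_div, integral_div, ← add_div]
      congr 1
      have ha : Integrable (fun ω => s.indicator (fun ω' => f ω' * f ω') ω - 2 * m * s.indicator f ω) P :=
        hint_ff.sub (hint_f.const_mul _)
      rw [integral_add ha ((integrable_const (m^2)).indicator hs), integral_sub hint_ff (hint_f.const_mul _),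
        integral_const_mul, hmint, i2]
      ring
    -- bound the second moment
    have ibd : ∫ ω, s.indicator (fun ω' => f ω' * f ω') ω ∂P ≤ k₁^2 * q := by
      have : ∫ ω, s.indicator (fun _ => k₁^2) ω ∂P = k₁^2 * q := by
        rw [integral_indicator_const (k₁^2) hs, measureReal_def, ← hq]; rw [mul_comm]; rfl
      rw [← this]
      refine integral_mono_ae hint_ff ((integrable_const (k₁^2)).indicator hs) ?_
      filter_upwards [hb] with ω h
      by_cases hω : ω ∈ s
      · rw [Set.indicator_of_mem hω, Set.indicator_of_mem hω]
        calc f ω * f ω = |f ω| * |f ω| := (abs_mul_abs_self _).symm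
          _ ≤ k₁ * k₁ := mul_le_mul h h (abs_nonneg _) hk1
          _ = k₁^2 := by ring
      · rw [Set.indicator_of_notMem hω, Set.indicator_of_notMem hω]
    have final : (∫ ω, s.indicator (fun ω' => f ω' * f ω') ω ∂P) / q^2 ≤ k₁^2 * k₂ := by
      have h1 : (∫ ω, s.indicator (fun ω' => f ω' * f ω') ω ∂P) / q^2 ≤ (k₁^2 * q) / q^2 :=
        div_le_div_of_nonneg_right ibd (by positivity) |>.trans_eq rfl
      have h2 : (k₁^2 * q) / q^2 = k₁^2 * (1/q) := by field_simp
      have h3 : k₁^2 * (1/q) ≤ k₁^2 * k₂ := mul_le_mul_of_nonneg_left hk₂ (by positivity)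
      linarith
    linarith [c1, c2, iSum ▸ final]

end AUX

/-- Bound on the variance of the Horvitz–Thompson estimator:
`Var(τ̂) ≤ 8k₁²k₂/n + 20k₁²k₂²(C(a) + C(b)) + 4(E(a) + E(b) + U(a) + U(b))`. -/
theorem variance_horvitz_thompson_le
    {Ω : Type*} [MeasurableSpace Ω] (P : Measure Ω) [IsProbabilityMeasure P]
    {Δ : Type*} [Fintype Δ] [DecidableEq Δ] [MeasurableSpace Δ] [MeasurableSingletonClass Δ]
    (n : ℕ) (d : Fin n → Ω → Δ) (Y : Fin n → Ω → ℝ)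
    (hd : ∀ i, Measurable (d i)) (hY : ∀ i, Measurable (Y i))
    (k₁ k₂ : ℝ) (hbdd : ∀ i, ∀ᵐ ω ∂P, |Y i ω| ≤ k₁)
    (a b : Δ)
    -- assignment probabilities `pᵢ(e) = P(dᵢ = e)`
    (p : Fin n → Δ → ℝ) (hp : ∀ i e, p i e = (P {ω | d i ω = e}).toReal)
    -- bounded inverse assignment probabilities for the exposures `a` and `b`
    (hk₂ : ∀ i, ∀ e ∈ ({a, b} : Set Δ), 1 / p i e ≤ k₂)
    -- joint positivity for the exposures `a` and `b`
    (hpos : ∀ i j : Fin n, i ≠ j → ∀ e ∈ ({a, b} : Set Δ),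
      0 < P ({ω | d i ω = e} ∩ {ω | d j ω = e}))
    -- conditional expected outcomes `ȳᵢ(e) = E[Yᵢ | dᵢ = e]` (zero for null events)
    (ybar : Fin n → Δ → ℝ)
    (hybar : ∀ i e, ybar i e = ∫ ω, Y i ω ∂(P[|{ω | d i ω = e}]))
    -- pairwise conditional means `μ̄ᵢⱼ(e₁,e₂) = E[Yᵢ | dᵢ = e₁, dⱼ = e₂]`
    (μbar : Fin n → Fin n → Δ → Δ → ℝ)
    (hμbar : ∀ i j e₁ e₂,
      μbar i j e₁ e₂ = ∫ ω, Y i ω ∂(P[|{ω | d i ω = e₁} ∩ {ω | d j ω = e₂}]))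
    -- systematic part of the error: `ε̃ᵢⱼ(e₁,e₂) = μ̄ᵢⱼ(e₁,e₂) − ȳᵢ(e₁)`
    (εtilde : Fin n → Fin n → Δ → Δ → ℝ)
    (hεtilde : ∀ i j e₁ e₂, εtilde i j e₁ e₂ = μbar i j e₁ e₂ - ybar i e₁)
    -- idiosyncratic part of the error: `ε̇ᵢⱼ = Yᵢ − μ̄ᵢⱼ(dᵢ, dⱼ)`
    (εdot : Fin n → Fin n → Ω → ℝ)
    (hεdot : ∀ i j ω, εdot i j ω = Y i ω - μbar i j (d i ω) (d j ω))
    -- the design-dependence term `C(e)`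
    (Cdep : Δ → ℝ)
    (hCdep : ∀ e, Cdep e = (1 / (n : ℝ) ^ 2) * ∑ i, ∑ j ∈ Finset.univ.erase i,
      |cov P (fun ω => if d i ω = e then (1 : ℝ) else 0)
        (fun ω => if d j ω = e then (1 : ℝ) else 0)|)
    -- the correlated-error term `E(e)`
    (Edep : Δ → ℝ)
    (hEdep : ∀ e, Edep e = (1 / (n : ℝ) ^ 2) * ∑ i, ∑ j ∈ Finset.univ.erase i,
      εtilde i j e e * εtilde j i e e)
    -- the unit-error term `U(e)`
    (Udep : Δ → ℝ)
    (hUdep : ∀ e, Udep e = (1 / (n : ℝ) ^ 2) * ∑ i, ∑ j ∈ Finset.univ.erase i,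
      condCov P ({ω | d i ω = e} ∩ {ω | d j ω = e}) (εdot i j) (εdot j i))
    -- the Horvitz–Thompson estimator
    (τhat : Ω → ℝ)
    (hτhat : ∀ ω, τhat ω = (1 / (n : ℝ)) * ∑ i,
      ((if d i ω = a then Y i ω else 0) / p i a - (if d i ω = b then Y i ω else 0) / p i b)) :
    variance τhat P
      ≤ 8 * k₁ ^ 2 * k₂ / n + 20 * k₁ ^ 2 * k₂ ^ 2 * (Cdep a + Cdep b)
        + 4 * (Edep a + Edep b + Udep a + Udep b) := by
  rcases Nat.eq_zero_or_pos n with hn0 | hn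
  · subst hn0
    have hτ0 : τhat = fun _ => (0:ℝ) := by
      funext ω; rw [hτhat]; simp
    have hC : ∀ e, Cdep e = 0 := fun e => by rw [hCdep]; simp
    have hE : ∀ e, Edep e = 0 := fun e => by rw [hEdep]; simp
    have hU : ∀ e, Udep e = 0 := fun e => by rw [hUdep]; simp
    rw [hτ0, hC, hC, hE, hE, hU, hU]
    have h0 : variance (fun _ : Ω => (0:ℝ)) P = 0 := by
      have : (fun _ : Ω => (0:ℝ)) = (0 : Ω → ℝ) := rfl
      rw [this, variance_zero]
    rw [h0]
    norm_num
  have hnne : (n:ℝ) ≠ 0 := Nat.cast_ne_zero.mpr hn.ne'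
  have ha' : a ∈ ({a, b} : Set Δ) := by simp
  have hb' : b ∈ ({a, b} : Set Δ) := by simp
  have hset : ∀ (i : Fin n) (e : Δ), MeasurableSet {ω : Ω | d i ω = e} :=
    fun i e => hd i (measurableSet_singleton e)
  have hk10 : 0 ≤ k₁ := by
    obtain ⟨ω, hω⟩ := (hbdd ⟨0, hn⟩).exists
    exact (abs_nonneg _).trans hω
  have hk20 : 0 ≤ k₂ := by
    refine le_trans ?_ (hk₂ ⟨0, hn⟩ a ha')
    rw [hp]
    positivity
  have hk₂' : ∀ (i : Fin n), ∀ e ∈ ({a, b} : Set Δ),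
      1 / (P {ω | d i ω = e}).toReal ≤ k₂ := by
    intro i e he
    rw [← hp]
    exact hk₂ i e he
  set A : Δ → Fin n → Ω → ℝ := fun e i ω =>
    ({ω' | d i ω' = e}).indicator
      (fun ω' => Y i ω' - ∫ x, Y i x ∂(P[|{ω' | d i ω' = e}])) ω
      / (P {ω' | d i ω' = e}).toReal with hA
  set B : Δ → Fin n → Ω → ℝ := fun e i ω =>
    ({ω' | d i ω' = e}).indicator
      (fun _ => ∫ x, Y i x ∂(P[|{ω' | d i ω' = e}])) ω
      / (P {ω' | d i ω' = e}).toReal with hB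
  have hAm : ∀ e i, Measurable (A e i) := by
    intro e i
    simp only [hA]
    exact (((hY i).sub measurable_const).indicator (hset i e)).div_const _
  have hBm : ∀ e i, Measurable (B e i) := by
    intro e i
    simp only [hB]
    exact (measurable_const.indicator (hset i e)).div_const _
  have hyb : ∀ (i : Fin n) (e : Δ), |∫ x, Y i x ∂(P[|{ω' | d i ω' = e}])| ≤ k₁ := by
    intro i e
    by_cases h : P {ω' | d i ω' = e} = 0
    · rw [ProbabilityTheory.cond, Measure.restrict_eq_zero.mpr h, smul_zero,
        integral_zero_measure]
      simpa
    · haveI := cond_isProbabilityMeasure (μ := P) h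
      exact vht_abs_integral_le (vht_ae_cond (hbdd i))
  have hAb : ∀ (i : Fin n), ∀ e ∈ ({a, b} : Set Δ),
      ∀ᵐ ω ∂P, |A e i ω| ≤ (k₁ + k₁) * k₂ := by
    intro i e he
    simp only [hA]
    refine vht_bd (by linarith) ?_ (hk₂' i e he)
    filter_upwards [hbdd i] with ω h
    calc |Y i ω - ∫ x, Y i x ∂(P[|{ω' | d i ω' = e}])|
        ≤ |Y i ω| + |∫ x, Y i x ∂(P[|{ω' | d i ω' = e}])| := abs_sub _ _
      _ ≤ k₁ + k₁ := add_le_add h (hyb i e)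
  have hBb : ∀ (i : Fin n), ∀ e ∈ ({a, b} : Set Δ),
      ∀ᵐ ω ∂P, |B e i ω| ≤ k₁ * k₂ := by
    intro i e he
    simp only [hB]
    exact vht_bd hk10 (Filter.Eventually.of_forall fun ω => hyb i e) (hk₂' i e he)
  -- the per-exposure bound
  have key : ∀ e ∈ ({a, b} : Set Δ),
      cov P (fun ω => (1/(n:ℝ)) * ∑ i, A e i ω) (fun ω => (1/(n:ℝ)) * ∑ i, A e i ω)
      + cov P (fun ω => (1/(n:ℝ)) * ∑ i, B e i ω) (fun ω => (1/(n:ℝ)) * ∑ i, B e i ω)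
      ≤ k₁^2*k₂/(n:ℝ) + 5*(k₁^2*k₂^2) * Cdep e + (Edep e + Udep e) := by
    intro e he
    rw [vht_cov_sum (P := P) (1/(n:ℝ)) (A e) (hAm e) (fun i => ⟨_, hAb i e he⟩),
        vht_cov_sum (P := P) (1/(n:ℝ)) (B e) (hBm e) (fun i => ⟨_, hBb i e he⟩)]
    have hIof : ∀ (m : Fin n), (fun ω => if d m ω = e then (1:ℝ) else 0)
        = ({ω' | d m ω' = e}).indicator (fun _ => (1:ℝ)) := by
      intro m
      funext ω
      by_cases h : d m ω = e
      · have hmem : ω ∈ {ω' | d m ω' = e} := h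
        rw [if_pos h, Set.indicator_of_mem hmem]
      · have hmem : ω ∉ {ω' | d m ω' = e} := h
        rw [if_neg h, Set.indicator_of_notMem hmem]
    have hsum : ∀ i : Fin n,
        (∑ j, cov P (A e i) (A e j)) + (∑ j, cov P (B e i) (B e j))
        ≤ k₁^2*k₂ + ∑ j ∈ univ.erase i,
            (εtilde i j e e * εtilde j i e e
              + condCov P ({ω | d i ω = e} ∩ {ω | d j ω = e}) (εdot i j) (εdot j i)
              + 5*(k₁^2*k₂^2) * |cov P (fun ω => if d i ω = e then (1:ℝ) else 0)
                  (fun ω => if d j ω = e then (1:ℝ) else 0)|) := by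
      intro i
      rw [← Finset.add_sum_erase _ (fun j => cov P (A e i) (A e j)) (mem_univ i),
          ← Finset.add_sum_erase _ (fun j => cov P (B e i) (B e j)) (mem_univ i)]
      have hdiag : cov P (A e i) (A e i) + cov P (B e i) (B e i) ≤ k₁^2*k₂ := by
        simp only [hA, hB]
        exact vht_diag (P := P) (hset i e) (hY i) (hbdd i) hk10 (hk₂' i e he)
      have hoff : ∀ j ∈ univ.erase i,
          cov P (A e i) (A e j) + cov P (B e i) (B e j)
          ≤ εtilde i j e e * εtilde j i e e
            + condCov P ({ω | d i ω = e} ∩ {ω | d j ω = e}) (εdot i j) (εdot j i)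
            + 5*(k₁^2*k₂^2) * |cov P (fun ω => if d i ω = e then (1:ℝ) else 0)
                (fun ω => if d j ω = e then (1:ℝ) else 0)| := by
        intro j hj
        have hij : i ≠ j := (Finset.ne_of_mem_erase hj).symm
        have hπ0 : P ({ω | d i ω = e} ∩ {ω | d j ω = e}) ≠ 0 := (hpos i j hij e he).ne'
        have hoffA := vht_offA (P := P) (hset i e) (hset j e) (hY i) (hY j)
          (hbdd i) (hbdd j) hπ0 (hk₂' i e he) (hk₂' j e he)
        have hoffB := vht_offB (P := P) (hset i e) (hset j e) (hY i) (hY j)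
          (hbdd i) (hbdd j) hπ0 (hk₂' i e he) (hk₂' j e he)
        have hinter : {ω : Ω | d j ω = e} ∩ {ω : Ω | d i ω = e}
            = {ω : Ω | d i ω = e} ∩ {ω : Ω | d j ω = e} := Set.inter_comm _ _
        have hεt1 : εtilde i j e e
            = (∫ x, Y i x ∂(P[|{ω' | d i ω' = e} ∩ {ω' | d j ω' = e}]))
              - ∫ x, Y i x ∂(P[|{ω' | d i ω' = e}]) := by
          rw [hεtilde, hμbar, hybar]
        have hεt2 : εtilde j i e e
            = (∫ x, Y j x ∂(P[|{ω' | d i ω' = e} ∩ {ω' | d j ω' = e}]))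
              - ∫ x, Y j x ∂(P[|{ω' | d j ω' = e}]) := by
          rw [hεtilde, hμbar, hybar, hinter]
        have hcc : condCov P ({ω | d i ω = e} ∩ {ω | d j ω = e}) (εdot i j) (εdot j i)
            = ∫ ω, (Y i ω - ∫ x, Y i x ∂(P[|{ω' | d i ω' = e} ∩ {ω' | d j ω' = e}]))
                * (Y j ω - ∫ x, Y j x ∂(P[|{ω' | d i ω' = e} ∩ {ω' | d j ω' = e}]))
                ∂(P[|{ω' | d i ω' = e} ∩ {ω' | d j ω' = e}]) := by
          refine vht_condCov_eq ((hset i e).inter (hset j e)) hπ0 (hY i) (hY j)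
            (hbdd i) (hbdd j) ?_ ?_
          · filter_upwards [vht_ae_mem_cond (P := P) ((hset i e).inter (hset j e))] with ω hω
            obtain ⟨h1, h2⟩ := hω
            rw [hεdot, (h1 : d i ω = e), (h2 : d j ω = e), hμbar]
          · filter_upwards [vht_ae_mem_cond (P := P) ((hset i e).inter (hset j e))] with ω hω
            obtain ⟨h1, h2⟩ := hω
            rw [hεdot, (h2 : d j ω = e), (h1 : d i ω = e), hμbar, hinter]
        rw [hεt1, hεt2, hcc, hIof i, hIof j]
        simp only [hA, hB]
        calc _ ≤ _ := add_le_add hoffA hoffB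
          _ = _ := by ring
      calc (cov P (A e i) (A e i) + ∑ j ∈ univ.erase i, cov P (A e i) (A e j))
            + (cov P (B e i) (B e i) + ∑ j ∈ univ.erase i, cov P (B e i) (B e j))
          = (cov P (A e i) (A e i) + cov P (B e i) (B e i))
            + ∑ j ∈ univ.erase i, (cov P (A e i) (A e j) + cov P (B e i) (B e j)) := by
            rw [Finset.sum_add_distrib]; ring
        _ ≤ k₁^2*k₂ + ∑ j ∈ univ.erase i,
            (εtilde i j e e * εtilde j i e e
              + condCov P ({ω | d i ω = e} ∩ {ω | d j ω = e}) (εdot i j) (εdot j i)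
              + 5*(k₁^2*k₂^2) * |cov P (fun ω => if d i ω = e then (1:ℝ) else 0)
                  (fun ω => if d j ω = e then (1:ℝ) else 0)|) :=
            add_le_add hdiag (Finset.sum_le_sum hoff)
    have hc2 : (0:ℝ) ≤ (1/(n:ℝ))^2 := by positivity
    have hfinal : (1/(n:ℝ))^2 * (∑ i, ∑ j, cov P (A e i) (A e j))
        + (1/(n:ℝ))^2 * (∑ i, ∑ j, cov P (B e i) (B e j))
        = (1/(n:ℝ))^2 * ∑ i, ((∑ j, cov P (A e i) (A e j)) + (∑ j, cov P (B e i) (B e j))) := by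
      rw [← mul_add, Finset.sum_add_distrib]
    rw [hfinal]
    calc (1/(n:ℝ))^2 * ∑ i, ((∑ j, cov P (A e i) (A e j)) + (∑ j, cov P (B e i) (B e j)))
        ≤ (1/(n:ℝ))^2 * ∑ i, (k₁^2*k₂ + ∑ j ∈ univ.erase i,
            (εtilde i j e e * εtilde j i e e
              + condCov P ({ω | d i ω = e} ∩ {ω | d j ω = e}) (εdot i j) (εdot j i)
              + 5*(k₁^2*k₂^2) * |cov P (fun ω => if d i ω = e then (1:ℝ) else 0)
                  (fun ω => if d j ω = e then (1:ℝ) else 0)|)) :=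
          mul_le_mul_of_nonneg_left (Finset.sum_le_sum fun i _ => hsum i) hc2
      _ = (1/(n:ℝ))^2 * ((n:ℝ) * (k₁^2*k₂)
            + ((∑ i, ∑ j ∈ univ.erase i, εtilde i j e e * εtilde j i e e)
              + (∑ i, ∑ j ∈ univ.erase i,
                  condCov P ({ω | d i ω = e} ∩ {ω | d j ω = e}) (εdot i j) (εdot j i))
              + 5*(k₁^2*k₂^2) * ∑ i, ∑ j ∈ univ.erase i,
                  |cov P (fun ω => if d i ω = e then (1:ℝ) else 0)
                    (fun ω => if d j ω = e then (1:ℝ) else 0)|)) := by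
          congr 1
          rw [Finset.sum_add_distrib, Finset.sum_const, card_univ, Fintype.card_fin,
            nsmul_eq_mul]
          congr 1
          rw [Finset.mul_sum]
          rw [← Finset.sum_add_distrib, ← Finset.sum_add_distrib]
          refine Finset.sum_congr rfl fun i _ => ?_
          rw [Finset.mul_sum]
          rw [← Finset.sum_add_distrib, ← Finset.sum_add_distrib]
      _ = k₁^2*k₂/(n:ℝ) + 5*(k₁^2*k₂^2) * Cdep e + (Edep e + Udep e) := by
          rw [hCdep, hEdep, hUdep]
          field_simp
          ring
  -- decomposition of the estimator
  have hW : ∀ (e : Δ) (i : Fin n) (ω : Ω),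
      (if d i ω = e then Y i ω else 0) / p i e = A e i ω + B e i ω := by
    intro e i ω
    simp only [hA, hB]
    rw [hp]
    by_cases h : d i ω = e
    · have hmem : ω ∈ {ω' | d i ω' = e} := h
      rw [Set.indicator_of_mem hmem, Set.indicator_of_mem hmem, if_pos h,
        ← add_div, sub_add_cancel]
    · have hmem : ω ∉ {ω' | d i ω' = e} := h
      rw [Set.indicator_of_notMem hmem, Set.indicator_of_notMem hmem, if_neg h]
      simp
  have hτeq : τhat = fun ω => (1/(n:ℝ)) * (∑ i, (A a i ω + B a i ω))
      - (1/(n:ℝ)) * (∑ i, (A b i ω + B b i ω)) := by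
    funext ω
    rw [hτhat, ← mul_sub, ← Finset.sum_sub_distrib]
    congr 1
    refine Finset.sum_congr rfl fun i _ => ?_
    rw [hW a i ω, hW b i ω]
  -- integrability package
  have hABm : ∀ e i, Measurable (fun ω => A e i ω + B e i ω) :=
    fun e i => (hAm e i).add (hBm e i)
  have hABb : ∀ e ∈ ({a, b} : Set Δ), ∀ (i : Fin n),
      ∃ C, ∀ᵐ ω ∂P, |A e i ω + B e i ω| ≤ C := by
    intro e he i
    refine ⟨(k₁ + k₁) * k₂ + k₁ * k₂, ?_⟩
    filter_upwards [hAb i e he, hBb i e he] with ω h1 h2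
    calc |A e i ω + B e i ω| ≤ |A e i ω| + |B e i ω| := abs_add_le _ _
      _ ≤ (k₁ + k₁) * k₂ + k₁ * k₂ := add_le_add h1 h2
  have hSm : ∀ e, Measurable (fun ω => (1/(n:ℝ)) * ∑ i, (A e i ω + B e i ω)) :=
    fun e => (Finset.measurable_sum univ fun i _ => hABm e i).const_mul _
  have hSb : ∀ e ∈ ({a, b} : Set Δ),
      ∃ C, ∀ᵐ ω ∂P, |(1/(n:ℝ)) * ∑ i, (A e i ω + B e i ω)| ≤ C :=
    fun e he => vht_sum_bd _ _ (hABb e he)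
  obtain ⟨Ca, hCa⟩ := hSb a ha'
  obtain ⟨Cb, hCb⟩ := hSb b hb'
  have hIa : Integrable (fun ω => (1/(n:ℝ)) * ∑ i, (A a i ω + B a i ω)) P :=
    vht_int (hSm a).aestronglyMeasurable hCa
  have hIb : Integrable (fun ω => (1/(n:ℝ)) * ∑ i, (A b i ω + B b i ω)) P :=
    vht_int (hSm b).aestronglyMeasurable hCb
  have hIaa : Integrable (fun ω => ((1/(n:ℝ)) * ∑ i, (A a i ω + B a i ω))
      * ((1/(n:ℝ)) * ∑ i, (A a i ω + B a i ω))) P :=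
    vht_int_mul (hSm a).aestronglyMeasurable (hSm a).aestronglyMeasurable hCa hCa
  have hIab : Integrable (fun ω => ((1/(n:ℝ)) * ∑ i, (A a i ω + B a i ω))
      * ((1/(n:ℝ)) * ∑ i, (A b i ω + B b i ω))) P :=
    vht_int_mul (hSm a).aestronglyMeasurable (hSm b).aestronglyMeasurable hCa hCb
  have hIbb : Integrable (fun ω => ((1/(n:ℝ)) * ∑ i, (A b i ω + B b i ω))
      * ((1/(n:ℝ)) * ∑ i, (A b i ω + B b i ω))) P :=
    vht_int_mul (hSm b).aestronglyMeasurable (hSm b).aestronglyMeasurable hCb hCb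
  -- variance = cov
  have hmem : MemLp τhat 2 P := by
    rw [hτeq]
    refine MemLp.of_bound ?_ (Ca + Cb) ?_
    · exact ((hSm a).sub (hSm b)).aestronglyMeasurable
    · filter_upwards [hCa, hCb] with ω h1 h2
      rw [Real.norm_eq_abs]
      calc |(1/(n:ℝ)) * (∑ i, (A a i ω + B a i ω)) - (1/(n:ℝ)) * (∑ i, (A b i ω + B b i ω))|
          ≤ |(1/(n:ℝ)) * (∑ i, (A a i ω + B a i ω))|
            + |(1/(n:ℝ)) * (∑ i, (A b i ω + B b i ω))| := abs_sub _ _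
        _ ≤ Ca + Cb := add_le_add h1 h2
  have hvar : variance τhat P = cov P τhat τhat := by
    rw [variance_eq_sub hmem]
    simp only [cov]
    congr 1
    · exact integral_congr_ae (Filter.Eventually.of_forall fun ω => by
        simp [pow_two])
    · rw [pow_two]
  -- split sums
  have hSsplit : ∀ e, (fun ω => (1/(n:ℝ)) * ∑ i, (A e i ω + B e i ω))
      = (fun ω => (1/(n:ℝ)) * ∑ i, A e i ω + (1/(n:ℝ)) * ∑ i, B e i ω) := by
    intro e
    funext ω
    rw [Finset.sum_add_distrib, mul_add]
  have hQint : ∀ e ∈ ({a, b} : Set Δ),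
      Integrable (fun ω => (1/(n:ℝ)) * ∑ i, A e i ω) P
      ∧ Integrable (fun ω => (1/(n:ℝ)) * ∑ i, B e i ω) P
      ∧ Integrable (fun ω => ((1/(n:ℝ)) * ∑ i, A e i ω) * ((1/(n:ℝ)) * ∑ i, A e i ω)) P
      ∧ Integrable (fun ω => ((1/(n:ℝ)) * ∑ i, A e i ω) * ((1/(n:ℝ)) * ∑ i, B e i ω)) P
      ∧ Integrable (fun ω => ((1/(n:ℝ)) * ∑ i, B e i ω) * ((1/(n:ℝ)) * ∑ i, B e i ω)) P := by
    intro e he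
    obtain ⟨CA, hCA⟩ := vht_sum_bd (P := P) (1/(n:ℝ)) (fun i => A e i)
      (fun i => ⟨_, hAb i e he⟩)
    obtain ⟨CB, hCB⟩ := vht_sum_bd (P := P) (1/(n:ℝ)) (fun i => B e i)
      (fun i => ⟨_, hBb i e he⟩)
    have hmA : Measurable (fun ω => (1/(n:ℝ)) * ∑ i, A e i ω) :=
      (Finset.measurable_sum univ fun i _ => hAm e i).const_mul _
    have hmB : Measurable (fun ω => (1/(n:ℝ)) * ∑ i, B e i ω) :=
      (Finset.measurable_sum univ fun i _ => hBm e i).const_mul _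
    exact ⟨vht_int hmA.aestronglyMeasurable hCA, vht_int hmB.aestronglyMeasurable hCB,
      vht_int_mul hmA.aestronglyMeasurable hmA.aestronglyMeasurable hCA hCA,
      vht_int_mul hmA.aestronglyMeasurable hmB.aestronglyMeasurable hCA hCB,
      vht_int_mul hmB.aestronglyMeasurable hmB.aestronglyMeasurable hCB hCB⟩
  obtain ⟨hA1, hB1, hAA1, hAB1, hBB1⟩ := hQint a ha'
  obtain ⟨hA2, hB2, hAA2, hAB2, hBB2⟩ := hQint b hb'
  have step2a : cov P (fun ω => (1/(n:ℝ)) * ∑ i, (A a i ω + B a i ω))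
        (fun ω => (1/(n:ℝ)) * ∑ i, (A a i ω + B a i ω))
      ≤ 2 * cov P (fun ω => (1/(n:ℝ)) * ∑ i, A a i ω) (fun ω => (1/(n:ℝ)) * ∑ i, A a i ω)
        + 2 * cov P (fun ω => (1/(n:ℝ)) * ∑ i, B a i ω) (fun ω => (1/(n:ℝ)) * ∑ i, B a i ω) := by
    rw [hSsplit a]
    exact vht_cov_add_le hA1 hB1 hAA1 hAB1 hBB1
  have step2b : cov P (fun ω => (1/(n:ℝ)) * ∑ i, (A b i ω + B b i ω))
        (fun ω => (1/(n:ℝ)) * ∑ i, (A b i ω + B b i ω))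
      ≤ 2 * cov P (fun ω => (1/(n:ℝ)) * ∑ i, A b i ω) (fun ω => (1/(n:ℝ)) * ∑ i, A b i ω)
        + 2 * cov P (fun ω => (1/(n:ℝ)) * ∑ i, B b i ω) (fun ω => (1/(n:ℝ)) * ∑ i, B b i ω) := by
    rw [hSsplit b]
    exact vht_cov_add_le hA2 hB2 hAA2 hAB2 hBB2
  have step1 : cov P τhat τhat
      ≤ 2 * cov P (fun ω => (1/(n:ℝ)) * ∑ i, (A a i ω + B a i ω))
            (fun ω => (1/(n:ℝ)) * ∑ i, (A a i ω + B a i ω))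
        + 2 * cov P (fun ω => (1/(n:ℝ)) * ∑ i, (A b i ω + B b i ω))
            (fun ω => (1/(n:ℝ)) * ∑ i, (A b i ω + B b i ω)) := by
    rw [hτeq]
    exact vht_cov_sub_le hIa hIb hIaa hIab hIbb
  have keya := key a ha'
  have keyb := key b hb'
  rw [hvar]
  refine step1.trans ?_
  have h2 : (0:ℝ) ≤ 2 := by norm_num
  have h4 : (0:ℝ) ≤ 4 := by norm_num
  calc (2 * cov P (fun ω => (1/(n:ℝ)) * ∑ i, (A a i ω + B a i ω))
            (fun ω => (1/(n:ℝ)) * ∑ i, (A a i ω + B a i ω)))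
        + 2 * cov P (fun ω => (1/(n:ℝ)) * ∑ i, (A b i ω + B b i ω))
            (fun ω => (1/(n:ℝ)) * ∑ i, (A b i ω + B b i ω))
      ≤ 2 * (2 * cov P (fun ω => (1/(n:ℝ)) * ∑ i, A a i ω) (fun ω => (1/(n:ℝ)) * ∑ i, A a i ω)
            + 2 * cov P (fun ω => (1/(n:ℝ)) * ∑ i, B a i ω) (fun ω => (1/(n:ℝ)) * ∑ i, B a i ω))
        + 2 * (2 * cov P (fun ω => (1/(n:ℝ)) * ∑ i, A b i ω) (fun ω => (1/(n:ℝ)) * ∑ i, A b i ω)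
            + 2 * cov P (fun ω => (1/(n:ℝ)) * ∑ i, B b i ω) (fun ω => (1/(n:ℝ)) * ∑ i, B b i ω)) :=
        add_le_add (mul_le_mul_of_nonneg_left step2a h2) (mul_le_mul_of_nonneg_left step2b h2)
    _ = 4 * (cov P (fun ω => (1/(n:ℝ)) * ∑ i, A a i ω) (fun ω => (1/(n:ℝ)) * ∑ i, A a i ω)
            + cov P (fun ω => (1/(n:ℝ)) * ∑ i, B a i ω) (fun ω => (1/(n:ℝ)) * ∑ i, B a i ω))
        + 4 * (cov P (fun ω => (1/(n:ℝ)) * ∑ i, A b i ω) (fun ω => (1/(n:ℝ)) * ∑ i, A b i ω)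
            + cov P (fun ω => (1/(n:ℝ)) * ∑ i, B b i ω) (fun ω => (1/(n:ℝ)) * ∑ i, B b i ω)) := by
        ring
    _ ≤ 4 * (k₁^2*k₂/(n:ℝ) + 5*(k₁^2*k₂^2) * Cdep a + (Edep a + Udep a))
        + 4 * (k₁^2*k₂/(n:ℝ) + 5*(k₁^2*k₂^2) * Cdep b + (Edep b + Udep b)) :=
        add_le_add (mul_le_mul_of_nonneg_left keya h4) (mul_le_mul_of_nonneg_left keyb h4)
    _ = 8 * k₁ ^ 2 * k₂ / n + 20 * k₁ ^ 2 * k₂ ^ 2 * (Cdep a + Cdep b)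
        + 4 * (Edep a + Edep b + Udep a + Udep b) := by
        field_simp
        ring
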